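/- arXiv:1612.00178 — 4 statements merged into one kernel-verified Lean document; each statement's English description precedes it below -/
import Mathlib

section
/- Let m be a real number with 0 ≤ m ≤ 1/2 and √m + √(1−m) ≤ 1.3168. Then m ≤ 0.1605. -/
theorem k1_bound (m : ℝ) (h0 : 0 ≤ m) (h1 : m ≤ 1 / 2)
    (h : Real.sqrt m + Real.sqrt (1 - m) ≤ 1.3168) : m ≤ 0.1605 := by
  by_contra h'
  push_neg at h'
  have hm1 : (0:ℝ) ≤ 1 - m := by linarith
  have ha := Real.sq_sqrt h0
  have hb := Real.sq_sqrt hm1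
  have ha0 := Real.sqrt_nonneg m
  have hb0 := Real.sqrt_nonneg (1 - m)
  have hs : (Real.sqrt m + Real.sqrt (1 - m))^2 ≤ 1.3168^2 := by
    apply pow_le_pow_left₀ (by positivity) h
  have hab : Real.sqrt m * Real.sqrt (1 - m) ≤ 0.36698112 := by nlinarith
  have hmm : m * (1 - m) ≤ 0.36698112^2 := by nlinarith [mul_nonneg ha0 hb0]
  nlinarith
end

section
/- Let m be a real number with 0.0244 ≤ m ≤ 0.1605 and √(1−2m) + √m ≤ 1.1606. Then m ≤ 0.0411. -/
theorem k4_bound (m : ℝ) (h0 : 0.0244 ≤ m) (h1 : m ≤ 0.1605)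
    (h : Real.sqrt (1 - 2 * m) + Real.sqrt m ≤ 1.1606) : m ≤ 0.0411 := by
  have hm0 : (0:ℝ) ≤ m := by linarith
  have h2 : (0:ℝ) ≤ 1 - 2*m := by linarith
  have hb := Real.sq_sqrt hm0
  have ha := Real.sq_sqrt h2
  have hb0 := Real.sqrt_nonneg m
  have ha0 := Real.sqrt_nonneg (1 - 2*m)
  nlinarith [sq_nonneg (Real.sqrt (1 - 2*m) + Real.sqrt m),
    sq_nonneg (Real.sqrt (1 - 2*m) * Real.sqrt m),
    mul_nonneg ha0 hb0, sq_nonneg (Real.sqrt m - 0.2),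
    sq_nonneg (Real.sqrt (1 - 2*m) - 0.9), sq_nonneg (m - 0.041)]
end

section
/- For every real x with 0.0244 ≤ x ≤ 0.1605, one has √(1−3x) + √x > 1.0044. -/
theorem three_small_bound (x : ℝ) (h0 : 0.0244 ≤ x) (h1 : x ≤ 0.1605) :
    1.0044 < Real.sqrt (1 - 3 * x) + Real.sqrt x := by
  have hx1 : (0:ℝ) ≤ 1 - 3 * x := by nlinarith
  have hx0 : (0:ℝ) ≤ x := by linarith
  set a := Real.sqrt (1 - 3 * x) with ha
  set b := Real.sqrt x with hb
  have ha0 : 0 ≤ a := Real.sqrt_nonneg _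
  have hb0 : 0 ≤ b := Real.sqrt_nonneg _
  have ha2 : a ^ 2 = 1 - 3 * x := Real.sq_sqrt hx1
  have hb2 : b ^ 2 = x := Real.sq_sqrt hx0
  nlinarith [sq_nonneg (a - b), sq_nonneg (a + b - 1.12), sq_nonneg (a - 0.96), sq_nonneg (b - 0.15), mul_nonneg ha0 hb0]
end

section
/- With k₇ = 1.4199, k₈ = √(2π/3 + √3/4), k₁ = 0.1605, and k₀ = 11.1962: π/k₇ + (k₈/√3)·(1 − √(k₁)·k₀/((2−k₁)·2√π)) ≥ 2.4990, and 4·2.4990 − √π/√(1−k₁) + 4·k₈/√3 ≥ 11.5561 > k₀. -/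
open Real

private lemma my_sqrt_lb {a x : ℝ} (ha : 0 ≤ a) (h : a ^ 2 ≤ x) : a ≤ Real.sqrt x := by
  nlinarith [Real.sq_sqrt (le_trans (sq_nonneg a) h), Real.sqrt_nonneg x]

private lemma my_sqrt_ub {b x : ℝ} (hb : 0 ≤ b) (h : x ≤ b ^ 2) : Real.sqrt x ≤ b := by
  calc Real.sqrt x ≤ Real.sqrt (b ^ 2) := Real.sqrt_le_sqrt h
    _ = b := by rw [Real.sqrt_sq hb]

theorem Fprime_numerics :
    let k₀ : ℝ := 11.1962
    let k₁ : ℝ := 0.1605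
    let k₇ : ℝ := 1.4199
    let k₈ : ℝ := Real.sqrt (2 * π / 3 + Real.sqrt 3 / 4)
    (2.4990 ≤ π / k₇ +
        (k₈ / Real.sqrt 3) *
          (1 - Real.sqrt k₁ * k₀ / ((2 - k₁) * (2 * Real.sqrt π)))) ∧
    (11.5561 ≤ 4 * 2.4990 - Real.sqrt π / Real.sqrt (1 - k₁) +
        4 * k₈ / Real.sqrt 3) ∧
    (11.5561 : ℝ) > k₀ := by
  intro k₀ k₁ k₇ k₈
  simp only [k₀, k₁, k₇, k₈]
  have hpi_l : (3.141592 : ℝ) < π := Real.pi_gt_d6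
  have hpi_u : π < (3.141593 : ℝ) := Real.pi_lt_d6
  have h3l : (1.7320508 : ℝ) ≤ Real.sqrt 3 := my_sqrt_lb (by norm_num) (by norm_num)
  have h3u : Real.sqrt 3 ≤ (1.7320509 : ℝ) := my_sqrt_ub (by norm_num) (by norm_num)
  have h3pos : (0 : ℝ) < Real.sqrt 3 := lt_of_lt_of_le (by norm_num) h3l
  have hspl : (1.772453 : ℝ) ≤ Real.sqrt π := my_sqrt_lb (by norm_num) (by nlinarith)
  have hspu : Real.sqrt π ≤ (1.7724540 : ℝ) := my_sqrt_ub (by norm_num) (by nlinarith)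
  have hk1u : Real.sqrt 0.1605 ≤ (0.40062452 : ℝ) := my_sqrt_ub (by norm_num) (by norm_num)
  have hk1l : (0 : ℝ) ≤ Real.sqrt 0.1605 := Real.sqrt_nonneg _
  have hk8l : (1.5897821 : ℝ) ≤ k₈ := my_sqrt_lb (by norm_num) (by nlinarith)
  have h8395l : (0.9162423 : ℝ) ≤ Real.sqrt (1 - 0.1605) := my_sqrt_lb (by norm_num) (by norm_num)
  have h8395pos : (0 : ℝ) < Real.sqrt (1 - 0.1605) := lt_of_lt_of_le (by norm_num) h8395l
  refine ⟨?_, ?_, by norm_num⟩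
  · -- first inequality
    have hA : (1.5897821 / 1.7320509 : ℝ) ≤ k₈ / Real.sqrt 3 := by
      apply div_le_div₀ (le_trans (by norm_num) hk8l) hk8l (by norm_num) h3u
    have hX : Real.sqrt 0.1605 * 11.1962 / ((2 - 0.1605) * (2 * Real.sqrt π)) ≤
        (0.40062452 : ℝ) * 11.1962 / ((2 - 0.1605) * (2 * 1.772453)) := by
      apply div_le_div₀ (by positivity) (by nlinarith) (by norm_num) (by nlinarith)
    have hBr : (1 - (0.40062452 : ℝ) * 11.1962 / ((2 - 0.1605) * (2 * 1.772453))) ≤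
        1 - Real.sqrt 0.1605 * 11.1962 / ((2 - 0.1605) * (2 * Real.sqrt π)) := by linarith
    have hAB : (1.5897821 / 1.7320509 : ℝ) *
        (1 - (0.40062452 : ℝ) * 11.1962 / ((2 - 0.1605) * (2 * 1.772453))) ≤
        (k₈ / Real.sqrt 3) *
          (1 - Real.sqrt 0.1605 * 11.1962 / ((2 - 0.1605) * (2 * Real.sqrt π))) := by
      apply mul_le_mul hA hBr (by norm_num) (by positivity)
    have hpidiv : (3.141592 : ℝ) / 1.4199 ≤ π / 1.4199 := by
      gcongr
    linarith [hpidiv, hAB]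
  · -- second inequality
    have hdiv : Real.sqrt π / Real.sqrt (1 - 0.1605) ≤ (1.7724540 / 0.9162423 : ℝ) := by
      apply div_le_div₀ (by norm_num) hspu (by norm_num) h8395l
    have hk8div : (4 * 1.5897821 / 1.7320509 : ℝ) ≤ 4 * k₈ / Real.sqrt 3 := by
      apply div_le_div₀ (by linarith) (by linarith) (by norm_num) h3u
    have : (11.5561 : ℝ) ≤ 4 * 2.4990 - 1.7724540 / 0.9162423 + 4 * 1.5897821 / 1.7320509 := by
      norm_num
    linarith
end
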